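/- The r-LOND calibrator f_t(p) = 1{p ≤ δγ_t t/ℓ_t} / ( δγ_t ⌈ max(p ℓ_t/(δγ_t), 1) ⌉ ), where ℓ_t = sum_{i=1}^t 1/i, maps a uniformly distributed (or superuniform) p-value P to an e-value: if P satisfies Pr(P ≤ s) ≤ s for all s ∈ [0,1], then E[f_t(P)] ≤ 1. -/

import Mathlib

open MeasureTheory

/-- The `t`-th harmonic number `ℓ_t = ∑_{i=1}^t 1/i`. -/
noncomputable def harmonic' (t : ℕ) : ℝ := ∑ i ∈ Finset.Icc 1 t, (1 : ℝ) / i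

/-- The r-LOND calibrator
`f_t(p) = 1{p ≤ δγ_t t/ℓ_t} / (δγ_t ⌈max(p ℓ_t/(δγ_t), 1)⌉)`. -/
noncomputable def rlondCalibrator (δ γ : ℝ) (t : ℕ) (p : ℝ) : ℝ :=
  (if p ≤ δ * γ * t / harmonic' t then (1 : ℝ) else 0) /
    (δ * γ * (⌈max (p * harmonic' t / (δ * γ)) 1⌉ : ℝ))

lemma harmonic'_ge_one {t : ℕ} (ht : 1 ≤ t) : 1 ≤ harmonic' t := by
  have h := Finset.single_le_sum (f := fun i : ℕ => (1:ℝ)/i)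
    (fun i _ => by positivity) (Finset.mem_Icc.mpr ⟨le_refl 1, ht⟩)
  simpa [harmonic'] using h

lemma harmonic'_succ (n : ℕ) : harmonic' (n+1) = harmonic' n + 1/((n:ℝ)+1) := by
  rw [harmonic', harmonic', Finset.sum_Icc_succ_top (by omega : 1 ≤ n+1)]
  push_cast; ring

lemma telescope : ∀ (t m : ℕ), m ≤ t →
    ∑ k ∈ Finset.Icc m t, ((1:ℝ)/k - 1/((k:ℝ)+1)) = 1/m - 1/((t:ℝ)+1) := by
  intro t
  induction t with
  | zero =>
    intro m hm
    interval_cases m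
    simp
  | succ n ih =>
    intro m hm
    rcases Nat.lt_or_ge m (n+1) with h | h
    · rw [Finset.sum_Icc_succ_top (by omega : m ≤ n+1), ih m (by omega)]
      push_cast; ring
    · have hmn : m = n+1 := le_antisymm hm h
      subst hmn
      simp

lemma main_sum (t : ℕ) :
    ∑ k ∈ Finset.Icc 1 t, ((1:ℝ)/k - 1/((k:ℝ)+1)) * k + (t:ℝ)/((t:ℝ)+1) = harmonic' t := by
  induction t with
  | zero => simp [harmonic']
  | succ n ih =>
    rw [Finset.sum_Icc_succ_top (by omega : 1 ≤ n+1), harmonic'_succ]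
    have h1 : ((n:ℝ)+1) ≠ 0 := by positivity
    have h2 : ((n:ℝ)+2) ≠ 0 := by positivity
    have hx : ((1:ℝ)/((n:ℝ)+1) - 1/((n:ℝ)+2)) * ((n:ℝ)+1) + ((n:ℝ)+1)/((n:ℝ)+2)
        - (n:ℝ)/((n:ℝ)+1) = 1/((n:ℝ)+1) := by
      have e1 : ((1:ℝ)/((n:ℝ)+1) - 1/((n:ℝ)+2)) * ((n:ℝ)+1) = 1 - ((n:ℝ)+1)/((n:ℝ)+2) := by
        rw [sub_mul, one_div, inv_mul_cancel₀ h1]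
        ring
      rw [e1]
      have e2 : (n:ℝ)/((n:ℝ)+1) = 1 - 1/((n:ℝ)+1) := by
        field_simp
        ring
      rw [e2]
      ring
    push_cast
    have hrw : ((n:ℝ)+1+1) = (n:ℝ)+2 := by ring
    rw [hrw]
    linarith [ih, hx]

lemma coef_nonneg {k : ℕ} (hk : 1 ≤ k) : (0:ℝ) ≤ 1/(k:ℝ) - 1/((k:ℝ)+1) := by
  have h0 : (0:ℝ) < k := by exact_mod_cast hk
  have := one_div_le_one_div_of_le h0 (by linarith : (k:ℝ) ≤ (k:ℝ)+1)
  linarith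

lemma rlond_nonneg (δ γ : ℝ) (hδ : 0 < δ) (hγ : 0 < γ) (t : ℕ) (p : ℝ) :
    0 ≤ rlondCalibrator δ γ t p := by
  rw [rlondCalibrator]
  have hx : (1:ℝ) ≤ max (p * harmonic' t / (δ * γ)) 1 := le_max_right _ _
  have hc : (0:ℤ) < ⌈max (p * harmonic' t / (δ * γ)) 1⌉ := Int.ceil_pos.mpr (by linarith)
  have hc' : (0:ℝ) < (⌈max (p * harmonic' t / (δ * γ)) 1⌉ : ℝ) := by exact_mod_cast hc
  have hden : 0 < δ * γ * (⌈max (p * harmonic' t / (δ * γ)) 1⌉ : ℝ) := by positivity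
  apply div_nonneg _ hden.le
  split <;> norm_num

lemma pointwise (δ γ : ℝ) (hδ : 0 < δ) (hγ : 0 < γ) (t : ℕ) (ht : 1 ≤ t) (p : ℝ) :
    rlondCalibrator δ γ t p ≤
      ∑ k ∈ Finset.Icc 1 t, (1/(δ*γ)) * ((1:ℝ)/k - 1/((k:ℝ)+1)) *
          (if p ≤ k * (δ*γ/harmonic' t) then 1 else 0)
        + (1/(δ*γ*((t:ℝ)+1))) * (if p ≤ t * (δ*γ/harmonic' t) then 1 else 0) := by
  have hD : 0 < δ*γ := mul_pos hδ hγ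
  have hL : (1:ℝ) ≤ harmonic' t := harmonic'_ge_one ht
  have hL0 : 0 < harmonic' t := by linarith
  have hterm : ∀ k ∈ Finset.Icc 1 t,
      (0:ℝ) ≤ (1/(δ*γ)) * ((1:ℝ)/k - 1/((k:ℝ)+1)) * (if p ≤ k * (δ*γ/harmonic' t) then 1 else 0) := by
    intro k hk
    have hk1 : 1 ≤ k := (Finset.mem_Icc.mp hk).1
    have := coef_nonneg hk1
    have h1 : (0:ℝ) ≤ 1/(δ*γ) := by positivity
    apply mul_nonneg (mul_nonneg h1 this)
    split <;> norm_num
  have htail : (0:ℝ) ≤ (1/(δ*γ*((t:ℝ)+1))) * (if p ≤ t * (δ*γ/harmonic' t) then 1 else 0) := by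
    apply mul_nonneg (by positivity)
    split <;> norm_num
  by_cases hpt : p ≤ δ * γ * t / harmonic' t
  · -- main case
    set x := max (p * harmonic' t / (δ * γ)) 1 with hxdef
    have hx1 : (1:ℝ) ≤ x := le_max_right _ _
    have hplD : p * harmonic' t ≤ δ * γ * t := by
      have := (le_div_iff₀ hL0).mp hpt
      linarith
    have hxt : x ≤ (t:ℝ) := by
      apply max_le
      · rw [div_le_iff₀ hD]; linarith
      · exact_mod_cast ht
    set m : ℤ := ⌈x⌉ with hmdef
    have hm1 : (1:ℤ) ≤ m := Int.ceil_pos.mpr (by linarith)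
    have hmt : m ≤ (t:ℤ) := Int.ceil_le.mpr (by exact_mod_cast hxt)
    set mN : ℕ := m.toNat with hmNdef
    have hmN1 : 1 ≤ mN := by omega
    have hmNt : mN ≤ t := by omega
    have hmNR : (mN:ℝ) = (m:ℝ) := by
      rw [hmNdef]; exact_mod_cast Int.toNat_of_nonneg (by omega)
    have hmN0 : (0:ℝ) < mN := by exact_mod_cast hmN1
    -- indicators are 1 for k ≥ mN
    have hind : ∀ k : ℕ, mN ≤ k → (if p ≤ k * (δ*γ/harmonic' t) then (1:ℝ) else 0) = 1 := by
      intro k hk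
      rw [if_pos]
      have h1 : p * harmonic' t / (δ*γ) ≤ x := le_max_left _ _
      have h2 : x ≤ (m:ℝ) := Int.le_ceil x
      have h3 : (m:ℝ) ≤ (k:ℝ) := by rw [← hmNR]; exact_mod_cast hk
      have h4 : p * harmonic' t / (δ*γ) ≤ (k:ℝ) := by linarith
      have h5 : p * harmonic' t ≤ (k:ℝ) * (δ*γ) := by
        rw [div_le_iff₀ hD] at h4; linarith
      rw [mul_div_assoc']
      rw [le_div_iff₀ hL0]
      linarith
    -- LHS value
    rw [rlondCalibrator, if_pos hpt]
    have hmR0 : (0:ℝ) < (m:ℝ) := by exact_mod_cast (by omega : (0:ℤ) < m)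
    -- lower bound RHS
    have hsub : Finset.Icc mN t ⊆ Finset.Icc 1 t := by
      intro k hk
      rw [Finset.mem_Icc] at *
      omega
    have hge : ∑ k ∈ Finset.Icc mN t, (1/(δ*γ)) * ((1:ℝ)/k - 1/((k:ℝ)+1)) *
          (if p ≤ k * (δ*γ/harmonic' t) then 1 else 0)
        ≤ ∑ k ∈ Finset.Icc 1 t, (1/(δ*γ)) * ((1:ℝ)/k - 1/((k:ℝ)+1)) *
          (if p ≤ k * (δ*γ/harmonic' t) then 1 else 0) :=
      Finset.sum_le_sum_of_subset_of_nonneg hsub (fun k hk _ => hterm k hk)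
    have hval : ∑ k ∈ Finset.Icc mN t, (1/(δ*γ)) * ((1:ℝ)/k - 1/((k:ℝ)+1)) *
          (if p ≤ k * (δ*γ/harmonic' t) then 1 else 0)
        = (1/(δ*γ)) * (1/(mN:ℝ) - 1/((t:ℝ)+1)) := by
      rw [Finset.sum_congr rfl (fun k hk => by
        rw [hind k (Finset.mem_Icc.mp hk).1, mul_one])]
      rw [← Finset.mul_sum, telescope t mN hmNt]
    have htail1 : (if p ≤ t * (δ*γ/harmonic' t) then (1:ℝ) else 0) = 1 := hind t hmNt
    have key : 1 / (δ * γ * (m:ℝ)) =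
        (1/(δ*γ)) * (1/(mN:ℝ) - 1/((t:ℝ)+1)) + (1/(δ*γ*((t:ℝ)+1))) := by
      rw [← hmNR]
      have ht1 : (0:ℝ) < (t:ℝ)+1 := by positivity
      field_simp
      ring
    calc 1 / (δ * γ * (m:ℝ))
        = (1/(δ*γ)) * (1/(mN:ℝ) - 1/((t:ℝ)+1)) + (1/(δ*γ*((t:ℝ)+1))) := key
      _ ≤ ∑ k ∈ Finset.Icc 1 t, (1/(δ*γ)) * ((1:ℝ)/k - 1/((k:ℝ)+1)) *
            (if p ≤ k * (δ*γ/harmonic' t) then 1 else 0)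
          + (1/(δ*γ*((t:ℝ)+1))) * (if p ≤ t * (δ*γ/harmonic' t) then 1 else 0) := by
          rw [htail1, mul_one]
          exact add_le_add (hval ▸ hge) le_rfl
  · rw [rlondCalibrator, if_neg hpt, zero_div]
    exact add_nonneg (Finset.sum_nonneg hterm) htail

/-- The r-LOND calibrator maps a superuniform p-value to an e-value. -/
theorem rlond_calibrator_evalue
    {Ω : Type*} [MeasurableSpace Ω] (μ : Measure Ω) [IsProbabilityMeasure μ]
    (δ : ℝ) (hδ : δ ∈ Set.Ioc (0 : ℝ) 1)
    (γ : ℝ) (hγ : 0 < γ)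
    (t : ℕ) (ht : 1 ≤ t)
    (P : Ω → ℝ) (hP : Measurable P)
    (hsuper : ∀ s ∈ Set.Icc (0 : ℝ) 1, (μ {ω | P ω ≤ s}).toReal ≤ s) :
    ∫ ω, rlondCalibrator δ γ t (P ω) ∂μ ≤ 1 := by
  obtain ⟨hδ0, hδ1⟩ := hδ
  have hD : 0 < δ*γ := mul_pos hδ0 hγ
  have hL : (1:ℝ) ≤ harmonic' t := harmonic'_ge_one ht
  have hL0 : (0:ℝ) < harmonic' t := by linarith
  set q : ℝ := δ*γ/harmonic' t with hq
  have hq0 : 0 < q := by positivity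
  -- indicator functions
  have hindInt : ∀ c : ℝ, Integrable (fun ω => if P ω ≤ c then (1:ℝ) else 0) μ := by
    intro c
    have hs : MeasurableSet {ω | P ω ≤ c} := hP measurableSet_Iic
    have h1 : Integrable ({ω | P ω ≤ c}.indicator (fun _ => (1:ℝ))) μ :=
      (integrable_const (1:ℝ)).indicator hs
    refine h1.congr (Filter.Eventually.of_forall fun ω => ?_)
    simp [Set.indicator_apply]
  have hindVal : ∀ c : ℝ, ∫ ω, (if P ω ≤ c then (1:ℝ) else 0) ∂μ
      = (μ {ω | P ω ≤ c}).toReal := by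
    intro c
    have hs : MeasurableSet {ω | P ω ≤ c} := hP measurableSet_Iic
    have h1 : ∫ ω, ({ω | P ω ≤ c}.indicator (fun _ => (1:ℝ))) ω ∂μ
        = (μ {ω | P ω ≤ c}).toReal • (1:ℝ) := integral_indicator_const (1:ℝ) hs
    rw [smul_eq_mul, mul_one] at h1
    rw [← h1]
    apply integral_congr_ae (Filter.Eventually.of_forall fun ω => ?_)
    simp [Set.indicator_apply]
  -- measure bound
  have hmb : ∀ s : ℝ, 0 ≤ s → (μ {ω | P ω ≤ s}).toReal ≤ s := by
    intro s hs
    by_cases h1 : s ≤ 1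
    · exact hsuper s ⟨hs, h1⟩
    · have h2 : μ {ω | P ω ≤ s} ≤ 1 := prob_le_one
      have h3 := ENNReal.toReal_mono ENNReal.one_ne_top h2
      rw [ENNReal.toReal_one] at h3
      linarith
  -- the dominating function
  set g : Ω → ℝ := fun ω =>
    ∑ k ∈ Finset.Icc 1 t, (1/(δ*γ)) * ((1:ℝ)/k - 1/((k:ℝ)+1)) *
        (if P ω ≤ k * q then 1 else 0)
      + (1/(δ*γ*((t:ℝ)+1))) * (if P ω ≤ t * q then 1 else 0) with hg
  have hgInt : Integrable g μ := by
    apply Integrable.add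
    · apply integrable_finset_sum
      intro k _
      exact ((hindInt ((k:ℝ)*q)).const_mul _)
    · exact ((hindInt ((t:ℝ)*q)).const_mul _)
  have step1 : ∫ ω, rlondCalibrator δ γ t (P ω) ∂μ ≤ ∫ ω, g ω ∂μ := by
    apply integral_mono_of_nonneg
    · exact Filter.Eventually.of_forall fun ω => rlond_nonneg δ γ hδ0 hγ t (P ω)
    · exact hgInt
    · exact Filter.Eventually.of_forall fun ω => pointwise δ γ hδ0 hγ t ht (P ω)
  have step2 : ∫ ω, g ω ∂μ
      = ∑ k ∈ Finset.Icc 1 t, (1/(δ*γ)) * ((1:ℝ)/k - 1/((k:ℝ)+1)) *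
          (μ {ω | P ω ≤ k * q}).toReal
        + (1/(δ*γ*((t:ℝ)+1))) * (μ {ω | P ω ≤ t * q}).toReal := by
    have hA : Integrable (fun ω => ∑ k ∈ Finset.Icc 1 t,
        (1/(δ*γ)) * ((1:ℝ)/k - 1/((k:ℝ)+1)) * (if P ω ≤ k * q then 1 else 0)) μ :=
      integrable_finset_sum _ (fun k _ => (hindInt _).const_mul _)
    have hB : Integrable (fun ω => (1/(δ*γ*((t:ℝ)+1))) *
        (if P ω ≤ (t:ℝ) * q then 1 else 0)) μ := (hindInt _).const_mul _
    have e0 : ∫ ω, g ω ∂μ =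
        (∫ ω, ∑ k ∈ Finset.Icc 1 t,
          ((1/(δ*γ)) * ((1:ℝ)/k - 1/((k:ℝ)+1)) * (if P ω ≤ k * q then 1 else 0)) ∂μ)
        + ∫ ω, (1/(δ*γ*((t:ℝ)+1))) * (if P ω ≤ (t:ℝ) * q then 1 else 0) ∂μ :=
      integral_add hA hB
    rw [e0, integral_finset_sum _ (fun k _ => (hindInt _).const_mul _)]
    congr 1
    · exact Finset.sum_congr rfl fun k _ => by rw [integral_const_mul, hindVal]
    · rw [integral_const_mul, hindVal]
  have step3 : ∑ k ∈ Finset.Icc 1 t, (1/(δ*γ)) * ((1:ℝ)/k - 1/((k:ℝ)+1)) *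
          (μ {ω | P ω ≤ k * q}).toReal
        + (1/(δ*γ*((t:ℝ)+1))) * (μ {ω | P ω ≤ t * q}).toReal
      ≤ ∑ k ∈ Finset.Icc 1 t, (1/(δ*γ)) * ((1:ℝ)/k - 1/((k:ℝ)+1)) * ((k:ℝ) * q)
        + (1/(δ*γ*((t:ℝ)+1))) * ((t:ℝ) * q) := by
    apply add_le_add
    · apply Finset.sum_le_sum
      intro k hk
      have hk1 : 1 ≤ k := (Finset.mem_Icc.mp hk).1
      have hc : (0:ℝ) ≤ (1/(δ*γ)) * ((1:ℝ)/k - 1/((k:ℝ)+1)) :=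
        mul_nonneg (by positivity) (coef_nonneg hk1)
      exact mul_le_mul_of_nonneg_left (hmb _ (by positivity)) hc
    · exact mul_le_mul_of_nonneg_left (hmb _ (by positivity)) (by positivity)
  have step4 : ∑ k ∈ Finset.Icc 1 t, (1/(δ*γ)) * ((1:ℝ)/k - 1/((k:ℝ)+1)) * ((k:ℝ) * q)
        + (1/(δ*γ*((t:ℝ)+1))) * ((t:ℝ) * q) = 1 := by
    have e1 : ∀ k ∈ Finset.Icc 1 t,
        (1/(δ*γ)) * ((1:ℝ)/k - 1/((k:ℝ)+1)) * ((k:ℝ) * q)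
        = (q/(δ*γ)) * (((1:ℝ)/k - 1/((k:ℝ)+1)) * k) := fun k _ => by ring
    rw [Finset.sum_congr rfl e1, ← Finset.mul_sum]
    have e2 : (1/(δ*γ*((t:ℝ)+1))) * ((t:ℝ) * q) = (q/(δ*γ)) * ((t:ℝ)/((t:ℝ)+1)) := by
      field_simp
    rw [e2, ← mul_add, main_sum t, hq]
    field_simp
  calc ∫ ω, rlondCalibrator δ γ t (P ω) ∂μ ≤ ∫ ω, g ω ∂μ := step1
    _ ≤ _ := by rw [step2]; exact step3
    _ = 1 := step4
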